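/- Let f, g : [0,1] → ℝ be continuous functions. Then the lower box-counting dimension of the graph of f·g satisfies dim_B_ G(f·g) ≤ max{dim_B_ G(f), dim_B̄ G(g)}. -/

import Mathlib

open Set Filter Metric

open MeasureTheory

noncomputable def coverNum {α : Type*} [PseudoMetricSpace α] (F : Set α) (δ : ℝ) : ℕ :=
  sInf {n : ℕ | ∃ t : Finset α, t.card = n ∧ F ⊆ ⋃ p ∈ t, Metric.closedBall p δ}

noncomputable def upperBoxDim {α : Type*} [PseudoMetricSpace α] (F : Set α) : ℝ :=
  Filter.limsup (fun δ : ℝ => Real.log (coverNum F δ) / -Real.log δ)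
    (nhdsWithin (0 : ℝ) (Set.Ioi 0))

noncomputable def lowerBoxDim {α : Type*} [PseudoMetricSpace α] (F : Set α) : ℝ :=
  Filter.liminf (fun δ : ℝ => Real.log (coverNum F δ) / -Real.log δ)
    (nhdsWithin (0 : ℝ) (Set.Ioi 0))

/-- Graph of `f` over the set `X`. -/
def fnGraphOn (f : ℝ → ℝ) (X : Set ℝ) : Set (ℝ × ℝ) := (fun x => (x, f x)) '' X

/-- Graph of `f` over `[0,1]`. -/
def G (f : ℝ → ℝ) : Set (ℝ × ℝ) := fnGraphOn f (Set.Icc 0 1)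

lemma coverNum_le_card {α : Type*} [PseudoMetricSpace α] {F : Set α} {δ : ℝ} (t : Finset α)
    (h : F ⊆ ⋃ p ∈ t, Metric.closedBall p δ) : coverNum F δ ≤ t.card :=
  Nat.sInf_le ⟨t, rfl, h⟩

lemma G_compact {f : ℝ → ℝ} (hf : ContinuousOn f (Set.Icc 0 1)) : IsCompact (G f) :=
  isCompact_Icc.image_of_continuousOn (continuousOn_id.prodMk hf)

lemma G_nonempty (f : ℝ → ℝ) : (G f).Nonempty :=
  ⟨(0, f 0), ⟨0, by simp, rfl⟩⟩

lemma mem_G {f : ℝ → ℝ} {x : ℝ} (hx : x ∈ Set.Icc (0:ℝ) 1) : (x, f x) ∈ G f := ⟨x, hx, rfl⟩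

lemma exists_min_cover {α : Type*} [PseudoMetricSpace α] {F : Set α} (hF : IsCompact F)
    {δ : ℝ} (hδ : 0 < δ) :
    ∃ t : Finset α, t.card = coverNum F δ ∧ F ⊆ ⋃ p ∈ t, Metric.closedBall p δ := by
  have hne : {n : ℕ | ∃ t : Finset α, t.card = n ∧ F ⊆ ⋃ p ∈ t, Metric.closedBall p δ}.Nonempty := by
    obtain ⟨s, _, hfin, hcov⟩ := hF.finite_cover_balls hδ
    refine ⟨hfin.toFinset.card, hfin.toFinset, rfl, hcov.trans ?_⟩
    refine Set.iUnion₂_subset fun x hx => ?_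
    exact Set.subset_iUnion₂_of_subset x (by simpa using hx) ball_subset_closedBall
  exact Nat.sInf_mem hne

lemma one_le_coverNum {α : Type*} [PseudoMetricSpace α] {F : Set α} (hF : IsCompact F)
    (hne : F.Nonempty) {δ : ℝ} (hδ : 0 < δ) : 1 ≤ coverNum F δ := by
  by_contra h
  push_neg at h
  interval_cases h' : coverNum F δ
  obtain ⟨t, ht, hcov⟩ := exists_min_cover hF hδ
  rw [h'] at ht
  rw [Finset.card_eq_zero] at ht
  subst ht
  obtain ⟨x, hx⟩ := hne
  simpa using hcov hx

lemma length_le_card_cover {β : Type*} {s : Set ℝ} {t : Finset β} {c : β → ℝ} {δ : ℝ}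
    (hδ : 0 ≤ δ) (hsub : s ⊆ ⋃ p ∈ t, Set.Icc (c p - δ) (c p + δ)) {L : ℝ} (hL : 0 ≤ L)
    (hvol : ENNReal.ofReal L ≤ volume s) : L ≤ t.card * (2 * δ) := by
  have h1 : volume s ≤ ∑ p ∈ t, volume (Set.Icc (c p - δ) (c p + δ)) :=
    le_trans (measure_mono (by simpa using hsub)) (measure_biUnion_finset_le t _)
  have h2 : ∀ p ∈ t, volume (Set.Icc (c p - δ) (c p + δ)) = ENNReal.ofReal (2 * δ) := by
    intro p _
    rw [Real.volume_Icc]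
    ring_nf
  rw [Finset.sum_congr rfl h2, Finset.sum_const, nsmul_eq_mul] at h1
  have := le_trans hvol h1
  rw [← ENNReal.ofReal_natCast, ← ENNReal.ofReal_mul (by positivity)] at this
  exact (ENNReal.ofReal_le_ofReal_iff (by positivity)).mp this

/-- x-projection bound: a δ-cover of the graph has at least 1/(2δ) elements. -/
lemma one_le_card_cover {h : ℝ → ℝ} {δ : ℝ} (hδ : 0 < δ) {t : Finset (ℝ × ℝ)}
    (hcov : G h ⊆ ⋃ p ∈ t, Metric.closedBall p δ) : 1 ≤ (t.card : ℝ) * (2 * δ) := by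
  refine length_le_card_cover (s := Set.Icc (0:ℝ) 1) (c := Prod.fst) hδ.le ?_ zero_le_one (by rw [Real.volume_Icc]; norm_num)
  intro x hx
  obtain ⟨p, hp, hd⟩ := Set.mem_iUnion₂.mp (hcov ⟨x, hx, rfl⟩)
  refine Set.mem_iUnion₂.mpr ⟨p, hp, ?_⟩
  have : dist x p.1 ≤ δ := le_trans (by rw [Prod.dist_eq]; exact le_max_left _ _) (mem_closedBall.mp hd)
  rw [Real.dist_eq, abs_le] at this
  constructor <;> [linarith [this.1]; linarith [this.2]]

open Classical in
/-- Oscillation of h over column i is at most 2δ times the number of cover squares near column i. -/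
lemma osc_le_of_cover {h : ℝ → ℝ} (hh : ContinuousOn h (Set.Icc 0 1)) {δ : ℝ} (hδ : 0 < δ)
    {t : Finset (ℝ × ℝ)} (hcov : G h ⊆ ⋃ p ∈ t, Metric.closedBall p δ) (i : ℕ)
    {x y : ℝ} (hx : x ∈ Set.Icc (0:ℝ) 1) (hy : y ∈ Set.Icc (0:ℝ) 1)
    (hxi : x ∈ Set.Icc ((i:ℝ)*δ) (((i:ℝ)+1)*δ)) (hyi : y ∈ Set.Icc ((i:ℝ)*δ) (((i:ℝ)+1)*δ)) :
    |h x - h y| ≤ ((t.filter (fun p => dist p.1 ((i:ℝ)*δ + δ/2) ≤ δ + δ/2)).card : ℝ) * (2 * δ) := by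
  set S := t.filter (fun p => dist p.1 ((i:ℝ)*δ + δ/2) ≤ δ + δ/2) with hS
  have huIcc1 : Set.uIcc x y ⊆ Set.Icc (0:ℝ) 1 := Set.uIcc_subset_Icc hx hy
  have huIcc2 : Set.uIcc x y ⊆ Set.Icc ((i:ℝ)*δ) (((i:ℝ)+1)*δ) := Set.uIcc_subset_Icc hxi hyi
  have key : Set.uIcc (h x) (h y) ⊆ ⋃ p ∈ S, Set.Icc (p.2 - δ) (p.2 + δ) := by
    intro z hz
    obtain ⟨w, hw, hwz⟩ := intermediate_value_uIcc (hh.mono huIcc1) hz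
    obtain ⟨p, hp, hd⟩ := Set.mem_iUnion₂.mp (hcov ⟨w, huIcc1 hw, rfl⟩)
    have hd' := mem_closedBall.mp hd
    rw [Prod.dist_eq, max_le_iff] at hd'
    refine Set.mem_iUnion₂.mpr ⟨p, ?_, ?_⟩
    · refine Finset.mem_filter.mpr ⟨hp, ?_⟩
      have h1 : dist p.1 w ≤ δ := by rw [dist_comm]; exact hd'.1
      have h2 : dist w ((i:ℝ)*δ + δ/2) ≤ δ/2 := by
        have := huIcc2 hw
        rw [Real.dist_eq, abs_le]
        constructor <;> [linarith [this.1]; linarith [this.2]]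
      calc dist p.1 ((i:ℝ)*δ + δ/2) ≤ dist p.1 w + dist w _ := dist_triangle _ _ _
      _ ≤ δ + δ/2 := add_le_add h1 h2
    · have : dist (h w) p.2 ≤ δ := hd'.2
      rw [Real.dist_eq, abs_le] at this
      rw [← hwz]
      constructor <;> [linarith [this.1]; linarith [this.2]]
  refine length_le_card_cover (c := Prod.snd) hδ.le key (abs_nonneg _) ?_
  rw [Set.uIcc, Real.volume_Icc, max_sub_min_eq_abs, abs_sub_comm]

open Classical in
lemma sum_card_filter_le {t : Finset (ℝ × ℝ)} {δ : ℝ} (hδ : 0 < δ) (m : ℕ) :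
    ∑ i ∈ Finset.range m, (t.filter (fun p => dist p.1 ((i:ℝ)*δ + δ/2) ≤ δ + δ/2)).card
      ≤ 4 * t.card := by
  have swap : ∑ i ∈ Finset.range m, (t.filter (fun p => dist p.1 ((i:ℝ)*δ + δ/2) ≤ δ + δ/2)).card
      = ∑ p ∈ t, ((Finset.range m).filter (fun i : ℕ => dist p.1 ((i:ℝ)*δ + δ/2) ≤ δ + δ/2)).card := by
    rw [Finset.sum_congr rfl (fun i _ => Finset.card_filter _ _),
        Finset.sum_congr rfl (fun p _ => Finset.card_filter _ _)]
    exact Finset.sum_comm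
  rw [swap]
  rw [show 4 * t.card = ∑ _p ∈ t, 4 by rw [Finset.sum_const]; ring]
  refine Finset.sum_le_sum fun p _ => ?_
  set Q := (Finset.range m).filter (fun i : ℕ => dist p.1 ((i:ℝ)*δ + δ/2) ≤ δ + δ/2) with hQ
  rcases Q.eq_empty_or_nonempty with he | hne
  · simp [he]
  · have hbound : ∀ j ∈ Q, j ≤ Q.min' hne + 3 := by
      intro j hj
      set a := Q.min' hne with ha
      have haQ : a ∈ Q := Q.min'_mem hne
      have hj' := (Finset.mem_filter.mp hj).2
      have ha' := (Finset.mem_filter.mp haQ).2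
      rw [Real.dist_eq, abs_le] at hj' ha'
      have h1 : (j:ℝ)*δ ≤ p.1 + δ := by linarith [hj'.1]
      have h2 : p.1 - 2*δ ≤ (a:ℝ)*δ := by linarith [ha'.2]
      have : (j:ℝ)*δ ≤ (a:ℝ)*δ + 3*δ := by linarith
      have : (j:ℝ) ≤ (a:ℝ) + 3 := by nlinarith
      exact_mod_cast this
    have hsub : Q ⊆ Finset.Icc (Q.min' hne) (Q.min' hne + 3) := fun j hj =>
      Finset.mem_Icc.mpr ⟨Q.min'_le j hj, hbound j hj⟩
    calc Q.card ≤ (Finset.Icc (Q.min' hne) (Q.min' hne + 3)).card := Finset.card_le_card hsub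
    _ = 4 := by rw [Nat.card_Icc]; omega

lemma column_cover (h : ℝ → ℝ) {δ : ℝ} (hδ : 0 < δ) {m : ℕ} (hm1 : 1 ≤ (m:ℝ) * δ)
    (n : ℕ → ℕ)
    (hosc : ∀ i < m, ∀ x ∈ Set.Icc (0:ℝ) 1, x ∈ Set.Icc ((i:ℝ)*δ) (((i:ℝ)+1)*δ) →
      |h x - h ((i:ℝ)*δ)| ≤ 2*δ*(n i)) :
    coverNum (G h) δ ≤ ∑ i ∈ Finset.range m, (2 * n i + 1) := by
  have hm0 : 1 ≤ m := by
    by_contra hc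
    push_neg at hc
    interval_cases m
    simp at hm1
    linarith
  set t : Finset (ℝ × ℝ) := (Finset.range m).biUnion (fun i =>
    (Finset.range (2 * n i + 1)).image (fun r : ℕ =>
      (((i:ℝ)*δ + δ/2), h ((i:ℝ)*δ) - 2*δ*(n i) + 2*δ*r))) with ht
  have hcard : t.card ≤ ∑ i ∈ Finset.range m, (2 * n i + 1) := by
    refine le_trans (Finset.card_biUnion_le) (Finset.sum_le_sum fun i _ => ?_)
    exact le_trans Finset.card_image_le (by simp)
  refine le_trans (coverNum_le_card t ?_) hcard
  rintro _ ⟨x, hx', rfl⟩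
  set i : ℕ := min ⌊x/δ⌋₊ (m-1) with hi
  have him : i < m := lt_of_le_of_lt (min_le_right _ _) (by omega)
  have hx0 : (0:ℝ) ≤ x := hx'.1
  have hxlo : (i:ℝ)*δ ≤ x := by
    have : (i:ℝ) ≤ ⌊x/δ⌋₊ := by exact_mod_cast min_le_left _ _
    have h2 : (⌊x/δ⌋₊ : ℝ) ≤ x/δ := Nat.floor_le (by positivity)
    calc (i:ℝ)*δ ≤ (x/δ)*δ := by nlinarith
    _ = x := by field_simp
  have hxhi : x ≤ ((i:ℝ)+1)*δ := by
    rcases min_cases ⌊x/δ⌋₊ (m-1) with ⟨heq, _⟩ | ⟨heq, hlt⟩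
    · have := Nat.lt_floor_add_one (x/δ)
      rw [hi, heq]
      have : x/δ < (⌊x/δ⌋₊ : ℝ) + 1 := Nat.lt_floor_add_one (x/δ)
      calc x = (x/δ)*δ := by field_simp
      _ ≤ ((⌊x/δ⌋₊:ℝ)+1)*δ := by nlinarith
    · have : (i:ℝ) + 1 = (m:ℝ) := by
        rw [hi, heq]
        push_cast [Nat.cast_sub hm0]
        ring
      rw [this]
      exact le_trans hx'.2 hm1
  have hxmem : x ∈ Set.Icc ((i:ℝ)*δ) (((i:ℝ)+1)*δ) := ⟨hxlo, hxhi⟩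
  have hoi := hosc i him x hx' hxmem
  set b : ℝ := h ((i:ℝ)*δ) - 2*δ*(n i) with hb
  have hv0 : 0 ≤ h x - b := by
    rw [hb]
    have := abs_le.mp hoi
    linarith [this.1]
  have hv1 : h x - b ≤ 2*δ*(2 * n i) := by
    rw [hb]
    have := abs_le.mp hoi
    push_cast
    linarith [this.2]
  set r : ℤ := round ((h x - b) / (2*δ)) with hr
  have hr0 : 0 ≤ r := by
    rw [hr, round_eq]
    refine Int.floor_nonneg.mpr (by positivity)
  have hr1 : r ≤ 2 * n i := by
    rw [hr, round_eq]
    have harg : (h x - b)/(2*δ) + 1/2 ≤ (2*n i : ℝ) + 1/2 := by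
      have : (h x - b)/(2*δ) ≤ (2*n i : ℝ) := by
        rw [div_le_iff₀ (by positivity)]
        push_cast
        linarith
      linarith
    calc ⌊(h x - b)/(2*δ) + 1/2⌋ ≤ ⌊(2*n i : ℝ) + 1/2⌋ := Int.floor_le_floor harg
    _ = 2 * n i := by
        rw [show ((2*n i : ℝ) + 1/2) = ((2*(n i) : ℤ) : ℝ) + 1/2 by push_cast; ring]
        rw [Int.floor_intCast_add]
        norm_num
  have hdisty : |h x - (b + 2*δ*(r.toNat : ℝ))| ≤ δ := by
    have htn : ((r.toNat : ℤ) : ℝ) = (r : ℝ) := by exact_mod_cast congrArg Int.cast (Int.toNat_of_nonneg hr0)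
    have habs := abs_sub_round ((h x - b) / (2*δ))
    have : |h x - b - 2*δ*(r:ℝ)| ≤ δ := by
      have h2 : h x - b - 2*δ*(r:ℝ) = ((h x - b)/(2*δ) - r) * (2*δ) := by field_simp
      rw [h2, abs_mul, abs_of_pos (by positivity : (0:ℝ) < 2*δ)]
      nlinarith [abs_nonneg ((h x - b)/(2*δ) - (r:ℝ))]
    calc |h x - (b + 2*δ*(r.toNat:ℝ))| = |h x - b - 2*δ*(r:ℝ)| := by
          rw [show ((r.toNat:ℝ)) = (r:ℝ) by exact_mod_cast htn]; ring_nf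
    _ ≤ δ := this
  refine Set.mem_iUnion₂.mpr ⟨(((i:ℝ)*δ + δ/2), b + 2*δ*(r.toNat:ℝ)), ?_, ?_⟩
  · rw [ht]
    refine Finset.mem_biUnion.mpr ⟨i, Finset.mem_range.mpr him, ?_⟩
    refine Finset.mem_image.mpr ⟨r.toNat, Finset.mem_range.mpr ?_, rfl⟩
    omega
  · rw [mem_closedBall, Prod.dist_eq]
    refine max_le ?_ ?_
    · have : dist x ((i:ℝ)*δ + δ/2) ≤ δ := by
        rw [Real.dist_eq, abs_le]
        constructor <;> linarith [hxmem.1, hxmem.2]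
      exact this
    · have : dist (h x) (b + 2*δ*(r.toNat:ℝ)) ≤ δ := by rw [Real.dist_eq]; exact hdisty
      exact this

open Classical in
lemma coverNum_mul_le {f g : ℝ → ℝ} (hf : ContinuousOn f (Set.Icc 0 1))
    (hg : ContinuousOn g (Set.Icc 0 1)) {M : ℕ}
    (hMf : ∀ x ∈ Set.Icc (0:ℝ) 1, |f x| ≤ (M:ℝ)) (hMg : ∀ x ∈ Set.Icc (0:ℝ) 1, |g x| ≤ (M:ℝ))
    {δ : ℝ} (hδ : 0 < δ) :
    coverNum (G (f*g)) δ ≤ (8*M+3) * (coverNum (G f) δ + coverNum (G g) δ) := by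
  obtain ⟨tf, htfc, htf⟩ := exists_min_cover (G_compact hf) hδ
  obtain ⟨tg, htgc, htg⟩ := exists_min_cover (G_compact hg) hδ
  set N := coverNum (G f) δ
  set N' := coverNum (G g) δ
  have hN1 : 1 ≤ N := one_le_coverNum (G_compact hf) (G_nonempty f) hδ
  set m := ⌈1/δ⌉₊ with hm
  have hm1 : 1 ≤ (m:ℝ) * δ := by
    have := Nat.le_ceil (1/δ)
    calc (1:ℝ) = (1/δ) * δ := by field_simp
    _ ≤ (m:ℝ) * δ := by nlinarith
  set k : ℕ → ℕ := fun i => (tf.filter (fun p => dist p.1 ((i:ℝ)*δ + δ/2) ≤ δ + δ/2)).card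
  set l : ℕ → ℕ := fun i => (tg.filter (fun p => dist p.1 ((i:ℝ)*δ + δ/2) ≤ δ + δ/2)).card
  have hosc : ∀ i < m, ∀ x ∈ Set.Icc (0:ℝ) 1, x ∈ Set.Icc ((i:ℝ)*δ) (((i:ℝ)+1)*δ) →
      |(f*g) x - (f*g) ((i:ℝ)*δ)| ≤ 2*δ*((M * (k i + l i) : ℕ) : ℝ) := by
    intro i hi x hx hxi
    have hyIcc : (i:ℝ)*δ ∈ Set.Icc (0:ℝ) 1 := by
      constructor
      · positivity
      · have h1 : (i:ℝ) < 1/δ := by exact_mod_cast Nat.lt_ceil.mp hi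
        have h2' : (1/δ)*δ = 1 := by field_simp
        nlinarith
    have hyi : (i:ℝ)*δ ∈ Set.Icc ((i:ℝ)*δ) (((i:ℝ)+1)*δ) := by
      constructor
      · exact le_refl _
      · have h2' : (1/δ)*δ = 1 := by field_simp
        nlinarith
    have hof := osc_le_of_cover hf hδ htf i hx hyIcc hxi hyi
    have hog := osc_le_of_cover hg hδ htg i hx hyIcc hxi hyi
    have hfx : |f x| ≤ (M:ℝ) := hMf x hx
    have hgy : |g ((i:ℝ)*δ)| ≤ (M:ℝ) := hMg _ hyIcc
    have expand : (f*g) x - (f*g) ((i:ℝ)*δ)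
        = f x * (g x - g ((i:ℝ)*δ)) + g ((i:ℝ)*δ) * (f x - f ((i:ℝ)*δ)) := by
      simp only [Pi.mul_apply]; ring
    rw [expand]
    calc |f x * (g x - g ((i:ℝ)*δ)) + g ((i:ℝ)*δ) * (f x - f ((i:ℝ)*δ))|
        ≤ |f x * (g x - g ((i:ℝ)*δ))| + |g ((i:ℝ)*δ) * (f x - f ((i:ℝ)*δ))| := abs_add_le _ _
    _ = |f x| * |g x - g ((i:ℝ)*δ)| + |g ((i:ℝ)*δ)| * |f x - f ((i:ℝ)*δ)| := by
        rw [abs_mul, abs_mul]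
    _ ≤ (M:ℝ) * ((l i : ℝ) * (2*δ)) + (M:ℝ) * ((k i :ℝ) * (2*δ)) := by
        have h1 : (0:ℝ) ≤ |g x - g ((i:ℝ)*δ)| := abs_nonneg _
        have h2 : (0:ℝ) ≤ |f x - f ((i:ℝ)*δ)| := abs_nonneg _
        have h3 : (0:ℝ) ≤ (M:ℝ) := Nat.cast_nonneg _
        nlinarith [abs_nonneg (f x), abs_nonneg (g ((i:ℝ)*δ))]
    _ = 2*δ*((M * (k i + l i) : ℕ) : ℝ) := by push_cast; ring
  have hcc := column_cover (f*g) hδ hm1 (fun i => M * (k i + l i)) hosc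
  have hsum : ∑ i ∈ Finset.range m, (2 * (M * (k i + l i)) + 1)
      = 2*M*(∑ i ∈ Finset.range m, k i) + 2*M*(∑ i ∈ Finset.range m, l i) + m := by
    have he : ∀ i, 2*(M*(k i + l i)) + 1 = (2*M*k i + 2*M*l i) + 1 := fun i => by ring
    rw [Finset.sum_congr rfl (fun i _ => he i), Finset.sum_add_distrib, Finset.sum_add_distrib,
      Finset.sum_const, ← Finset.mul_sum, ← Finset.mul_sum, smul_eq_mul, mul_one,
      Finset.card_range]
  have hks : ∑ i ∈ Finset.range m, k i ≤ 4 * N := by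
    rw [← htfc]; exact sum_card_filter_le hδ m
  have hls : ∑ i ∈ Finset.range m, l i ≤ 4 * N' := by
    rw [← htgc]; exact sum_card_filter_le hδ m
  have hmN : m ≤ 2*N + 1 := by
    have h1 : (1:ℝ) ≤ (N:ℝ) * (2*δ) := by rw [← htfc] at *; exact one_le_card_cover hδ htf
    have : (1:ℝ)/δ ≤ 2*(N:ℝ) := by
      rw [div_le_iff₀ hδ]; nlinarith
    have h3 : (1:ℝ)/δ ≤ ((2*N+1:ℕ):ℝ) := by push_cast; linarith
    exact Nat.ceil_le.mpr h3
  calc coverNum (G (f*g)) δ ≤ ∑ i ∈ Finset.range m, (2 * (M * (k i + l i)) + 1) := hcc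
  _ = 2*M*(∑ i ∈ Finset.range m, k i) + 2*M*(∑ i ∈ Finset.range m, l i) + m := hsum
  _ ≤ 2*M*(4*N) + 2*M*(4*N') + (2*N+1) := by
      have := Nat.mul_le_mul_left (2*M) hks
      have := Nat.mul_le_mul_left (2*M) hls
      omega
  _ ≤ (8*M+3) * (N + N') := by nlinarith [hN1]


open Classical in
lemma coverNum_le_poly {h : ℝ → ℝ} (hh : ContinuousOn h (Set.Icc 0 1)) {M : ℕ}
    (hM : ∀ x ∈ Set.Icc (0:ℝ) 1, |h x| ≤ (M:ℝ)) {δ : ℝ} (hδ : 0 < δ) (hδ1 : δ ≤ 1) :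
    (coverNum (G h) δ : ℝ) ≤ (4*M+6)/δ^2 := by
  set m := ⌈1/δ⌉₊ with hm
  have hm1 : 1 ≤ (m:ℝ) * δ := by
    have := Nat.le_ceil (1/δ)
    calc (1:ℝ) = (1/δ) * δ := by field_simp
    _ ≤ (m:ℝ) * δ := by nlinarith
  set n : ℕ := ⌈(M:ℝ)/δ⌉₊ with hn
  have hosc : ∀ i < m, ∀ x ∈ Set.Icc (0:ℝ) 1, x ∈ Set.Icc ((i:ℝ)*δ) (((i:ℝ)+1)*δ) →
      |h x - h ((i:ℝ)*δ)| ≤ 2*δ*(n : ℝ) := by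
    intro i hi x hx _
    have hyIcc : (i:ℝ)*δ ∈ Set.Icc (0:ℝ) 1 := by
      constructor
      · positivity
      · have h1 : (i:ℝ) < 1/δ := by exact_mod_cast Nat.lt_ceil.mp hi
        have h2' : (1/δ)*δ = 1 := by field_simp
        nlinarith
    have h1 := hM x hx
    have h2 := hM _ hyIcc
    have h3 : (M:ℝ)/δ ≤ (n:ℝ) := Nat.le_ceil _
    have h4 : (M:ℝ) ≤ δ * n := by
      rw [div_le_iff₀ hδ] at h3
      linarith [h3]
    calc |h x - h ((i:ℝ)*δ)| ≤ |h x| + |h ((i:ℝ)*δ)| := abs_sub _ _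
    _ ≤ 2*(M:ℝ) := by linarith
    _ ≤ 2*δ*n := by linarith
  have hcc := column_cover h hδ hm1 (fun _ => n) hosc
  have hsum : ∑ _i ∈ Finset.range m, (2 * n + 1) = m * (2*n+1) := by
    rw [Finset.sum_const, Finset.card_range, smul_eq_mul]
  rw [hsum] at hcc
  have hmr : (m:ℝ) ≤ 2/δ := by
    have h1 : (m:ℝ) < 1/δ + 1 := by
      have := Nat.ceil_lt_add_one (by positivity : (0:ℝ) ≤ 1/δ)
      exact_mod_cast this
    have h2 : (1:ℝ) ≤ 1/δ := by rw [le_div_iff₀ hδ]; linarith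
    have h3 : (2:ℝ)/δ = 2*(1/δ) := by ring
    linarith
  have hnr : (2*n+1 : ℝ) ≤ (2*M+3)/δ := by
    have h1 : (n:ℝ) < (M:ℝ)/δ + 1 := by
      have := Nat.ceil_lt_add_one (by positivity : (0:ℝ) ≤ (M:ℝ)/δ)
      exact_mod_cast this
    have h2 : (1:ℝ) ≤ 1/δ := by rw [le_div_iff₀ hδ]; linarith
    have h3 : (0:ℝ) ≤ M := Nat.cast_nonneg _
    rw [div_eq_mul_one_div]
    calc (2*n+1 : ℝ) ≤ 2*((M:ℝ)/δ + 1) + 1 := by linarith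
    _ = 2*(M:ℝ)*(1/δ) + 3 := by field_simp; ring
    _ ≤ 2*(M:ℝ)*(1/δ) + 3*(1/δ) := by nlinarith
    _ ≤ (2*M+3)*(1/δ) := by nlinarith
  calc (coverNum (G h) δ : ℝ) ≤ (m : ℝ) * (2*n+1 : ℝ) := by exact_mod_cast hcc
  _ ≤ (2/δ) * ((2*M+3)/δ) := by
      have : (0:ℝ) ≤ (2*n+1:ℝ) := by positivity
      have h2 : (0:ℝ) ≤ (m:ℝ) := Nat.cast_nonneg _
      nlinarith
  _ = (4*M+6)/δ^2 := by field_simp; ring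

lemma ratio_le_poly {h : ℝ → ℝ} (hh : ContinuousOn h (Set.Icc 0 1)) {M : ℕ}
    (hM : ∀ x ∈ Set.Icc (0:ℝ) 1, |h x| ≤ (M:ℝ)) {δ : ℝ} (hδ : 0 < δ) (hδ1 : δ < 1) :
    Real.log (coverNum (G h) δ) / -Real.log δ ≤ Real.log (4*M+6) / -Real.log δ + 2 := by
  have hld : 0 < -Real.log δ := by
    have := Real.log_neg hδ hδ1
    linarith
  have h1 : 1 ≤ coverNum (G h) δ := one_le_coverNum (G_compact hh) (G_nonempty h) hδ
  have hpos : (0:ℝ) < coverNum (G h) δ := by exact_mod_cast h1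
  have h2 : Real.log (coverNum (G h) δ) ≤ Real.log ((4*M+6)/δ^2) :=
    Real.log_le_log hpos (coverNum_le_poly hh hM hδ hδ1.le)
  have h3 : Real.log ((4*M+6)/δ^2) = Real.log (4*M+6) - 2 * Real.log δ := by
    rw [Real.log_div (by positivity) (by positivity), Real.log_pow]
    push_cast
    ring
  rw [div_add' _ _ _ (ne_of_gt hld)]
  rw [div_le_div_iff₀ hld hld]
  nlinarith [h2, h3]

theorem lowerBoxDim_graph_mul_le (f g : ℝ → ℝ)
    (hf : ContinuousOn f (Set.Icc 0 1)) (hg : ContinuousOn g (Set.Icc 0 1)) :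
    lowerBoxDim (G (f * g)) ≤ max (lowerBoxDim (G f)) (upperBoxDim (G g)) := by
  set ℱ := nhdsWithin (0:ℝ) (Set.Ioi 0) with hℱ
  haveI : ℱ.NeBot := by rw [hℱ]; infer_instance
  obtain ⟨Cf, hCf⟩ := isCompact_Icc.exists_bound_of_continuousOn hf
  obtain ⟨Cg, hCg⟩ := isCompact_Icc.exists_bound_of_continuousOn hg
  set M : ℕ := ⌈max Cf Cg⌉₊ + 1 with hM
  have hM1 : (1:ℝ) ≤ (M:ℝ) := by
    rw [hM]; push_cast; linarith [Nat.cast_nonneg (α := ℝ) ⌈max Cf Cg⌉₊]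
  have hMf : ∀ x ∈ Set.Icc (0:ℝ) 1, |f x| ≤ (M:ℝ) := by
    intro x hx
    have h1 : |f x| ≤ Cf := by simpa [Real.norm_eq_abs] using hCf x hx
    have h2 : Cf ≤ max Cf Cg := le_max_left _ _
    have h3 : max Cf Cg ≤ (⌈max Cf Cg⌉₊ : ℝ) := Nat.le_ceil _
    rw [hM]; push_cast; linarith
  have hMg : ∀ x ∈ Set.Icc (0:ℝ) 1, |g x| ≤ (M:ℝ) := by
    intro x hx
    have h1 : |g x| ≤ Cg := by simpa [Real.norm_eq_abs] using hCg x hx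
    have h2 : Cg ≤ max Cf Cg := le_max_right _ _
    have h3 : max Cf Cg ≤ (⌈max Cf Cg⌉₊ : ℝ) := Nat.le_ceil _
    rw [hM]; push_cast; linarith
  have hfg : ContinuousOn (f * g) (Set.Icc 0 1) := hf.mul hg
  have hMfg : ∀ x ∈ Set.Icc (0:ℝ) 1, |(f*g) x| ≤ ((M*M : ℕ):ℝ) := by
    intro x hx
    have h1 := hMf x hx
    have h2 := hMg x hx
    have h3 := abs_nonneg (f x)
    have h4 := abs_nonneg (g x)
    have hcast : ((M*M:ℕ):ℝ) = (M:ℝ)*(M:ℝ) := by push_cast; ring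
    rw [hcast]
    calc |(f*g) x| = |f x| * |g x| := by rw [Pi.mul_apply, abs_mul]
    _ ≤ (M:ℝ) * (M:ℝ) := by nlinarith
  set u := fun δ : ℝ => Real.log (coverNum (G (f*g)) δ) / -Real.log δ with hu
  set a := fun δ : ℝ => Real.log (coverNum (G f) δ) / -Real.log δ with ha
  set b := fun δ : ℝ => Real.log (coverNum (G g) δ) / -Real.log δ with hb
  have hIoo : ∀ᶠ δ in ℱ, δ ∈ Set.Ioo (0:ℝ) 1 :=
    Ioo_mem_nhdsGT_of_mem ⟨le_refl 0, zero_lt_one⟩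
  have htends : Tendsto (fun δ : ℝ => -Real.log δ) ℱ atTop :=
    tendsto_neg_atBot_atTop.comp Real.tendsto_log_nhdsGT_zero
  have hconst0 : ∀ C : ℝ, Tendsto (fun δ : ℝ => C / -Real.log δ) ℱ (nhds 0) := fun C =>
    Tendsto.div_atTop tendsto_const_nhds htends
  -- upper bounds on a and b
  have hbf : ∀ᶠ δ in ℱ, a δ ≤ 3 := by
    filter_upwards [hIoo, (hconst0 (Real.log (4*M+6))).eventually_lt_const zero_lt_one]
      with δ hδ hδ2
    have := ratio_le_poly hf hMf hδ.1 hδ.2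
    rw [ha]; dsimp only; linarith
  have hbg : ∀ᶠ δ in ℱ, b δ ≤ 3 := by
    filter_upwards [hIoo, (hconst0 (Real.log (4*M+6))).eventually_lt_const zero_lt_one]
      with δ hδ hδ2
    have := ratio_le_poly hg hMg hδ.1 hδ.2
    rw [hb]; dsimp only; linarith
  have hnn : ∀ᶠ δ in ℱ, 0 ≤ u δ := by
    filter_upwards [hIoo] with δ hδ
    have hld : 0 < -Real.log δ := by linarith [Real.log_neg hδ.1 hδ.2]
    exact div_nonneg (Real.log_natCast_nonneg _) hld.le
  have hBu : ℱ.IsBoundedUnder (· ≥ ·) u := Filter.isBoundedUnder_of_eventually_ge hnn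
  have hBb : ℱ.IsBoundedUnder (· ≤ ·) b := Filter.isBoundedUnder_of_eventually_le hbg
  have hCa : ℱ.IsCoboundedUnder (· ≥ ·) a :=
    (Filter.isBoundedUnder_of_eventually_le hbf).isCoboundedUnder_ge
  set K : ℕ := 8*M+3 with hK
  -- the key eventual inequality
  have hE2 : ∀ᶠ δ in ℱ, u δ ≤ Real.log (2*K) / -Real.log δ + max (a δ) (b δ) := by
    filter_upwards [hIoo] with δ hδ01
    obtain ⟨hδ, hδ1⟩ := hδ01
    have hld : 0 < -Real.log δ := by linarith [Real.log_neg hδ hδ1]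
    set N := coverNum (G f) δ with hN
    set N' := coverNum (G g) δ with hN'
    have hN1 : 1 ≤ N := one_le_coverNum (G_compact hf) (G_nonempty f) hδ
    have hN'1 : 1 ≤ N' := one_le_coverNum (G_compact hg) (G_nonempty g) hδ
    have hfg1 : 1 ≤ coverNum (G (f*g)) δ := one_le_coverNum (G_compact hfg) (G_nonempty _) hδ
    have hkey : coverNum (G (f*g)) δ ≤ K * (N + N') := coverNum_mul_le hf hg hMf hMg hδ
    have hcast : (coverNum (G (f*g)) δ : ℝ) ≤ (2*K : ℝ) * max (N:ℝ) (N':ℝ) := by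
      have h1 : (coverNum (G (f*g)) δ : ℝ) ≤ (K:ℝ) * ((N:ℝ) + (N':ℝ)) := by exact_mod_cast hkey
      have h2 : (N:ℝ) ≤ max (N:ℝ) (N':ℝ) := le_max_left _ _
      have h3 : (N':ℝ) ≤ max (N:ℝ) (N':ℝ) := le_max_right _ _
      have h4 : (0:ℝ) ≤ (K:ℝ) := Nat.cast_nonneg _
      nlinarith
    have hmaxpos : (0:ℝ) < max (N:ℝ) (N':ℝ) := by
      have : (1:ℝ) ≤ (N:ℝ) := by exact_mod_cast hN1
      exact lt_of_lt_of_le zero_lt_one (le_trans this (le_max_left _ _))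
    have hKpos : (0:ℝ) < 2*(K:ℝ) := by
      rw [hK]; push_cast; linarith
    have hlog : Real.log (coverNum (G (f*g)) δ)
        ≤ Real.log (2*K) + max (Real.log N) (Real.log N') := by
      have h5 : Real.log (coverNum (G (f*g)) δ) ≤ Real.log ((2*K:ℝ) * max (N:ℝ) (N':ℝ)) :=
        Real.log_le_log (by exact_mod_cast hfg1) hcast
      have h6 : Real.log ((2*K:ℝ) * max (N:ℝ) (N':ℝ))
          = Real.log (2*K) + Real.log (max (N:ℝ) (N':ℝ)) :=
        Real.log_mul (ne_of_gt hKpos) (ne_of_gt hmaxpos)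
      have h7 : Real.log (max (N:ℝ) (N':ℝ)) = max (Real.log N) (Real.log N') := by
        rcases le_total (N:ℝ) (N':ℝ) with hle | hle
        · rw [max_eq_right hle, max_eq_right]
          exact Real.log_le_log (by exact_mod_cast hN1) hle
        · rw [max_eq_left hle, max_eq_left]
          exact Real.log_le_log (by exact_mod_cast hN'1) hle
      exact h5.trans (le_of_eq (by rw [h6, h7]))
    calc u δ ≤ (Real.log (2*K) + max (Real.log N) (Real.log N')) / -Real.log δ := by
          rw [hu]; dsimp only
          exact (div_le_div_iff_of_pos_right hld).mpr hlog
    _ = Real.log (2*K) / -Real.log δ + max (Real.log N) (Real.log N') / -Real.log δ := by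
          rw [add_div]
    _ = Real.log (2*K) / -Real.log δ + max (a δ) (b δ) := by
          congr 1
          rcases le_total (Real.log N) (Real.log N') with hle | hle
          · rw [max_eq_right hle, ha, hb]; dsimp only
            rw [max_eq_right ((div_le_div_iff_of_pos_right hld).mpr hle)]
          · rw [max_eq_left hle, ha, hb]; dsimp only
            rw [max_eq_left ((div_le_div_iff_of_pos_right hld).mpr hle)]
  -- endgame
  show Filter.liminf u ℱ ≤ max (Filter.liminf a ℱ) (Filter.limsup b ℱ)
  refine le_of_forall_pos_le_add fun ε hε => ?_
  set A := Filter.liminf a ℱ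
  set B := Filter.limsup b ℱ
  have hfa : ∃ᶠ δ in ℱ, a δ < A + ε/3 := frequently_lt_of_liminf_lt hCa (by linarith)
  have heb : ∀ᶠ δ in ℱ, b δ < B + ε/3 := eventually_lt_of_limsup_lt (by linarith) hBb
  have hec : ∀ᶠ δ in ℱ, Real.log (2*K) / -Real.log δ < ε/3 :=
    (hconst0 _).eventually_lt_const (by linarith)
  have hfreq : ∃ᶠ δ in ℱ, u δ ≤ max A B + ε := by
    refine (hfa.and_eventually (heb.and (hec.and hE2))).mono ?_
    rintro δ ⟨h1, h2, h3, h4⟩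
    have h5 : max (a δ) (b δ) ≤ max (A + ε/3) (B + ε/3) :=
      max_le_max h1.le h2.le
    rw [max_add_add_right] at h5
    linarith
  exact liminf_le_of_frequently_le hfreq hBu
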